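/- If A is a simple set, then A is not a cylinder. -/

import Mathlib

/-- Many-one reducibility on subsets of ℕ. -/
def ManyOneRed (X Y : Set ℕ) : Prop :=
  ∃ f : ℕ → ℕ, Computable f ∧ ∀ x, x ∈ X ↔ f x ∈ Y

/-- Many-one equivalence. -/
def ManyOneEq (X Y : Set ℕ) : Prop := ManyOneRed X Y ∧ ManyOneRed Y X

/-- One-one reducibility on subsets of ℕ. -/
def OneOneRed (X Y : Set ℕ) : Prop :=
  ∃ f : ℕ → ℕ, Computable f ∧ Function.Injective f ∧ ∀ x, x ∈ X ↔ f x ∈ Y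

/-- One-one equivalence. -/
def OneOneEq (X Y : Set ℕ) : Prop := OneOneRed X Y ∧ OneOneRed Y X

/-- `A × ℕ` coded into ℕ via the standard computable pairing bijection. -/
def timesNat (A : Set ℕ) : Set ℕ :=
  {m | ∃ x ∈ A, ∃ n : ℕ, m = Nat.pair x n}

/-- `C` is a cylinder if `C ≡₁ A × ℕ` for some `A`. -/
def Cylinder (C : Set ℕ) : Prop := ∃ A : Set ℕ, OneOneEq C (timesNat A)

/-- `S` is computably enumerable: the domain of a partial computable function. -/
def CE (S : Set ℕ) : Prop :=
  ∃ ψ : ℕ →. ℕ, Partrec ψ ∧ ∀ x, x ∈ S ↔ (ψ x).Dom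

/-- pm-reducibility: `x ∈ X ↔ ψ(x)↓ ∧ ψ(x) ∈ Y` for a partial computable `ψ`. -/
def PmRed (X Y : Set ℕ) : Prop :=
  ∃ ψ : ℕ →. ℕ, Partrec ψ ∧ ∀ x, x ∈ X ↔ ∃ y ∈ ψ x, y ∈ Y

/-- pm-equivalence. -/
def PmEq (X Y : Set ℕ) : Prop := PmRed X Y ∧ PmRed Y X

/-- A simple set: c.e., with infinite complement containing no infinite c.e. subset. -/
def SimpleSet (S : Set ℕ) : Prop :=
  CE S ∧ Sᶜ.Infinite ∧ ∀ W : Set ℕ, W ⊆ Sᶜ → CE W → ¬ W.Infinite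

/-- A c.e. set `A` has a rigid complement: `Aᶜ` is infinite and any two
pm-equivalent subsets of `Aᶜ` have finite symmetric difference. -/
def RigidComplement (A : Set ℕ) : Prop :=
  Aᶜ.Infinite ∧ ∀ X Y : Set ℕ, X ⊆ Aᶜ → Y ⊆ Aᶜ → PmEq X Y → (symmDiff X Y).Finite

open Classical in
/-- Truth-table reducibility: a computable list of queries together with a
computable boolean truth-table evaluator. -/
def TTRed (X Y : Set ℕ) : Prop :=
  ∃ (q : ℕ → List ℕ) (t : ℕ → List Bool → Bool),
    Computable q ∧ Computable₂ t ∧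
      ∀ x, x ∈ X ↔ t x ((q x).map (fun n => decide (n ∈ Y))) = true

/-- Truth-table equivalence. -/
def TTEq (X Y : Set ℕ) : Prop := TTRed X Y ∧ TTRed Y X

lemma range_CE_aux (h : ℕ → ℕ) (hc : Computable h) : CE (Set.range h) := by
  refine ⟨fun m => Nat.rfind (fun n => (decide (h n = m) : Part Bool)), ?_, fun m => ?_⟩
  · exact Partrec.rfind ((Computable₂.comp₂ (Primrec.eq.decide.to_comp)
      (hc.comp₂ Computable.snd.to₂) Computable.fst.to₂).partrec₂)
  · simp only [Nat.rfind_dom, Part.coe_some, Part.mem_some_iff, Set.mem_range]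
    constructor
    · rintro ⟨n, rfl⟩; exact ⟨n, by simp, fun _ _ => trivial⟩
    · rintro ⟨n, hn, -⟩; exact ⟨n, by obtain ⟨_, h2⟩ := hn; exact of_decide_eq_true h2⟩

theorem stmt17 (A : Set ℕ) (h : SimpleSet A) : ¬ Cylinder A := by
  rintro ⟨B, ⟨f, hf, hfinj, hfspec⟩, g, hg, hginj, hgspec⟩
  obtain ⟨hce, hinf, hsimple⟩ := h
  -- B must have an element outside, else A = univ
  have hBne : Bᶜ.Nonempty := by
    rcases Set.eq_empty_or_nonempty Bᶜ with he | hne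
    · exfalso
      have hBuniv : B = Set.univ := by
        rw [← Set.compl_empty_iff]; exact he
      have : A = Set.univ := by
        ext x
        simp only [Set.mem_univ, iff_true]
        rw [hfspec x]
        exact ⟨(f x).unpair.1, by simp [hBuniv], (f x).unpair.2, by simp⟩
      rw [this] at hinf
      simp at hinf
    · exact hne
  obtain ⟨b, hb⟩ := hBne
  set t : ℕ → ℕ := fun n => g (Nat.pair b n) with ht
  have htc : Computable t :=
    hg.comp ((Primrec₂.natPair.to_comp).comp (Computable.const b) Computable.id)
  have htinj : Function.Injective t := by
    intro a c hac
    have := hginj hac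
    simpa using congrArg (fun m => m.unpair.2) this
  have hsub : Set.range t ⊆ Aᶜ := by
    rintro _ ⟨n, rfl⟩
    intro hmem
    have : Nat.pair b n ∈ timesNat B := (hgspec _).mpr hmem
    obtain ⟨x, hx, n', hn'⟩ := this
    have : b = x := by
      have := congrArg (fun m => m.unpair.1) hn'
      simpa using this
    exact hb (this ▸ hx)
  exact hsimple (Set.range t) hsub (range_CE_aux t htc)
    (Set.infinite_range_of_injective htinj)
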